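/- Let ρ be a finite positive Borel measure on ℝ and define g(x) = ∫ (s² + 1)/(s - x)² dρ(s) ∈ [0, ∞]. If g(x) ≤ 1/(t-1) for all x in an open interval I (for some t > 1), then ρ(I) = 0. -/

import Mathlib

open MeasureTheory Set

lemma stmt_3_core (ρ : Measure ℝ) [IsFiniteMeasure ρ] (t : ℝ) (ht : 1 < t)
    (a b : ℝ)
    (hg : ∀ x ∈ Ioo a b,
      (∫⁻ s : ℝ, ENNReal.ofReal ((s ^ 2 + 1) / (s - x) ^ 2) ∂ρ)
        ≤ ENNReal.ofReal (1 / (t - 1)))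
    (c d : ℝ) (hac : a < c) (hcd : c < d) (hdb : d ≤ b) :
    ρ (Ioc c d) ≤ ENNReal.ofReal ((d - c) ^ 2 / (t - 1)) := by
  have hcb : c < b := lt_of_lt_of_le hcd hdb
  have hx := hg c ⟨hac, hcb⟩
  have hdc : (0:ℝ) < d - c := by linarith
  have ht1 : (0:ℝ) < t - 1 := by linarith
  have key : ρ (Ioc c d) * ENNReal.ofReal (1 / (d - c) ^ 2)
      ≤ ENNReal.ofReal (1 / (t - 1)) := by
    calc ρ (Ioc c d) * ENNReal.ofReal (1 / (d - c) ^ 2)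
        = ∫⁻ _ in Ioc c d, ENNReal.ofReal (1 / (d - c) ^ 2) ∂ρ := by
          rw [setLIntegral_const, mul_comm]
      _ ≤ ∫⁻ s in Ioc c d, ENNReal.ofReal ((s ^ 2 + 1) / (s - c) ^ 2) ∂ρ := by
          refine setLIntegral_mono' measurableSet_Ioc fun s hs => ?_
          apply ENNReal.ofReal_le_ofReal
          have hsc : (0:ℝ) < s - c := by linarith [hs.1]
          have h2 : (s - c) ^ 2 ≤ (d - c) ^ 2 := by nlinarith [hs.2]
          exact div_le_div₀ (by positivity) (by nlinarith) (by positivity) h2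
      _ ≤ ∫⁻ s : ℝ, ENNReal.ofReal ((s ^ 2 + 1) / (s - c) ^ 2) ∂ρ :=
          setLIntegral_le_lintegral _ _
      _ ≤ _ := hx
  have hk0 : ENNReal.ofReal (1 / (d - c) ^ 2) ≠ 0 := by
    simp only [ne_eq, ENNReal.ofReal_eq_zero, not_le]
    positivity
  have hkt : ENNReal.ofReal (1 / (d - c) ^ 2) ≠ ⊤ := ENNReal.ofReal_ne_top
  have hle : ρ (Ioc c d) ≤ ENNReal.ofReal (1 / (t - 1)) / ENNReal.ofReal (1 / (d - c) ^ 2) :=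
    (ENNReal.le_div_iff_mul_le (Or.inl hk0) (Or.inl hkt)).mpr key
  have heq : (d - c) ^ 2 / (t - 1) = (1 / (t - 1)) / (1 / (d - c) ^ 2) := by
    field_simp
  rw [heq, ENNReal.ofReal_div_of_pos (by positivity)]
  exact hle

lemma stmt_3_split (ρ : Measure ℝ) [IsFiniteMeasure ρ] (t : ℝ) (ht : 1 < t)
    (a b : ℝ)
    (hg : ∀ x ∈ Ioo a b,
      (∫⁻ s : ℝ, ENNReal.ofReal ((s ^ 2 + 1) / (s - x) ^ 2) ∂ρ)
        ≤ ENNReal.ofReal (1 / (t - 1)))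
    (ε : ℝ) (hε : 0 < ε) :
    ∀ n : ℕ, ∀ c d : ℝ, a < c → c < d → d ≤ b → d - c ≤ n * ε →
      ρ (Ioc c d) ≤ ENNReal.ofReal ((d - c) * ε / (t - 1)) := by
  have ht1 : (0:ℝ) < t - 1 := by linarith
  intro n
  induction n with
  | zero => intro c d hac hcd hdb hlen; simp at hlen; linarith
  | succ n ih =>
    intro c d hac hcd hdb hlen
    by_cases hsmall : d - c ≤ ε
    · calc ρ (Ioc c d) ≤ ENNReal.ofReal ((d - c) ^ 2 / (t - 1)) :=
            stmt_3_core ρ t ht a b hg c d hac hcd hdb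
        _ ≤ ENNReal.ofReal ((d - c) * ε / (t - 1)) := by
            apply ENNReal.ofReal_le_ofReal
            have h : (d - c) ^ 2 ≤ (d - c) * ε := by nlinarith
            gcongr
    · push_neg at hsmall
      set m := d - ε with hm
      have hcm : c < m := by simp [hm]; linarith
      have hmd : m < d := by simp [hm]; linarith
      have ham : a < m := lt_trans hac hcm
      have hmb : m ≤ b := le_of_lt (lt_of_lt_of_le hmd hdb)
      have hsub : Ioc c d ⊆ Ioc c m ∪ Ioc m d := by
        rw [Set.Ioc_union_Ioc_eq_Ioc (le_of_lt hcm) (le_of_lt hmd)]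
      have h1 : ρ (Ioc c m) ≤ ENNReal.ofReal ((m - c) * ε / (t - 1)) := by
        apply ih c m hac hcm hmb
        push_cast [hm]; push_cast at hlen; linarith
      have h2 : ρ (Ioc m d) ≤ ENNReal.ofReal ((d - m) ^ 2 / (t - 1)) :=
        stmt_3_core ρ t ht a b hg m d ham hmd hdb
      calc ρ (Ioc c d) ≤ ρ (Ioc c m) + ρ (Ioc m d) :=
            le_trans (measure_mono hsub) (measure_union_le _ _)
        _ ≤ ENNReal.ofReal ((m - c) * ε / (t - 1)) + ENNReal.ofReal ((d - m) ^ 2 / (t - 1)) :=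
            add_le_add h1 h2
        _ = ENNReal.ofReal ((m - c) * ε / (t - 1) + (d - m) ^ 2 / (t - 1)) := by
            have hmc : (0:ℝ) ≤ m - c := by linarith
            rw [ENNReal.ofReal_add (by positivity) (by positivity)]
        _ ≤ ENNReal.ofReal ((d - c) * ε / (t - 1)) := by
            apply ENNReal.ofReal_le_ofReal
            have hdm : d - m = ε := by simp [hm]
            rw [hdm, ← add_div]
            gcongr
            nlinarith
        
lemma stmt_3_ioc (ρ : Measure ℝ) [IsFiniteMeasure ρ] (t : ℝ) (ht : 1 < t)
    (a b : ℝ)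
    (hg : ∀ x ∈ Ioo a b,
      (∫⁻ s : ℝ, ENNReal.ofReal ((s ^ 2 + 1) / (s - x) ^ 2) ∂ρ)
        ≤ ENNReal.ofReal (1 / (t - 1)))
    (c : ℝ) (hac : a < c) (hcb : c < b) : ρ (Ioc c b) = 0 := by
  have ht1 : (0:ℝ) < t - 1 := by linarith
  have hbc : (0:ℝ) < b - c := by linarith
  refine nonpos_iff_eq_zero.mp (ENNReal.le_of_forall_pos_le_add fun ε hε _ => ?_)
  rw [zero_add]
  have hεR : (0:ℝ) < (ε : ℝ) := hε
  set δ : ℝ := (ε : ℝ) * (t - 1) / (b - c) with hδ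
  have hδpos : 0 < δ := by positivity
  obtain ⟨n, hn⟩ := exists_nat_ge ((b - c) / δ)
  have hlen : b - c ≤ n * δ := by
    rw [div_le_iff₀ hδpos] at hn; linarith
  have := stmt_3_split ρ t ht a b hg δ hδpos n c b hac hcb le_rfl hlen
  refine le_trans this ?_
  have : (b - c) * δ / (t - 1) = (ε : ℝ) := by
    field_simp [hδ]
    rw [hδ]; field_simp
  rw [this, ENNReal.ofReal_coe_nnreal]

theorem stmt_3 (ρ : Measure ℝ) [IsFiniteMeasure ρ] (t : ℝ) (ht : 1 < t)
    (a b : ℝ) (hab : a < b)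
    (hg : ∀ x ∈ Ioo a b,
      (∫⁻ s : ℝ, ENNReal.ofReal ((s ^ 2 + 1) / (s - x) ^ 2) ∂ρ)
        ≤ ENNReal.ofReal (1 / (t - 1))) :
    ρ (Ioo a b) = 0 := by
  set c : ℕ → ℝ := fun n => a + (b - a) / (n + 2) with hc
  have hcmem : ∀ n : ℕ, a < c n ∧ c n < b := by
    intro n
    constructor
    · have : (0:ℝ) < (b - a) / (n + 2) := div_pos (by linarith) (by positivity)
      simp [hc]; linarith
    · have h1 : (b - a) / (n + 2) < b - a := by
        apply div_lt_self (by linarith)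
        push_cast; linarith
      simp [hc]; linarith
  have hcover : Ioo a b ⊆ ⋃ n : ℕ, Ioc (c n) b := by
    intro s hs
    have hsa : (0:ℝ) < s - a := by linarith [hs.1]
    obtain ⟨n, hn⟩ := exists_nat_gt ((b - a) / (s - a))
    refine mem_iUnion.mpr ⟨n, ?_, le_of_lt hs.2⟩
    have : (b - a) / (n + 2) < s - a := by
      rw [div_lt_iff₀ (by positivity)]
      rw [div_lt_iff₀ hsa] at hn
      nlinarith [hsa.le]
    simp only [hc]; linarith
  have hnull : ρ (⋃ n : ℕ, Ioc (c n) b) = 0 :=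
    measure_iUnion_null fun n => stmt_3_ioc ρ t ht a b hg (c n) (hcmem n).1 (hcmem n).2
  exact nonpos_iff_eq_zero.mp (hnull ▸ measure_mono hcover)
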